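/- Let p₁, p₂ ∈ ℂ. Then (|p₁−1| + |p₁+1| = |p₂−1| + |p₂+1| or |p₁−1| − |p₁+1| = |p₂−1| − |p₂+1|) implies p₁ + conj(p₁) + p₂ + conj(p₂) + |p₁−1||p₂−1| − |p₁+1||p₂+1| = 0. Conversely, if this last equation holds, then |p₁−1| + |p₁+1| = |p₂−1| + |p₂+1| or |p₁−1| − |p₁+1| = |p₂−1| − |p₂+1|. -/

import Mathlib

theorem stmt_8 (p₁ p₂ : ℂ) :
    (‖p₁ - 1‖ + ‖p₁ + 1‖
        = ‖p₂ - 1‖ + ‖p₂ + 1‖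
      ∨ ‖p₁ - 1‖ - ‖p₁ + 1‖
        = ‖p₂ - 1‖ - ‖p₂ + 1‖)
    ↔ p₁ + (starRingEnd ℂ) p₁ + p₂ + (starRingEnd ℂ) p₂
        + ((‖p₁ - 1‖ * ‖p₂ - 1‖ : ℝ) : ℂ)
        - ((‖p₁ + 1‖ * ‖p₂ + 1‖ : ℝ) : ℂ) = 0 := by
  have key : ∀ p : ℂ, ‖p + 1‖ ^ 2 - ‖p - 1‖ ^ 2 = 4 * p.re := by
    intro p
    rw [Complex.sq_norm, Complex.sq_norm, Complex.normSq_apply, Complex.normSq_apply]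
    simp [Complex.add_re, Complex.add_im, Complex.sub_re, Complex.sub_im]
    ring
  have k1 := key p₁
  have k2 := key p₂
  set a₁ := ‖p₁ - 1‖ with ha₁
  set b₁ := ‖p₁ + 1‖ with hb₁
  set a₂ := ‖p₂ - 1‖ with ha₂
  set b₂ := ‖p₂ + 1‖ with hb₂
  have hre : (p₁ + (starRingEnd ℂ) p₁ + p₂ + (starRingEnd ℂ) p₂
        + ((a₁ * a₂ : ℝ) : ℂ) - ((b₁ * b₂ : ℝ) : ℂ) = 0)
      ↔ (2 * p₁.re + 2 * p₂.re + a₁ * a₂ - b₁ * b₂ = 0) := by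
    have e : p₁ + (starRingEnd ℂ) p₁ + p₂ + (starRingEnd ℂ) p₂
        = ((2 * p₁.re + 2 * p₂.re : ℝ) : ℂ) := by
      rw [show p₁ + (starRingEnd ℂ) p₁ + p₂ + (starRingEnd ℂ) p₂
            = (p₁ + (starRingEnd ℂ) p₁) + (p₂ + (starRingEnd ℂ) p₂) from by ring,
        Complex.add_conj, Complex.add_conj]
      push_cast; ring
    rw [e, show ((2 * p₁.re + 2 * p₂.re : ℝ) : ℂ) + ((a₁ * a₂ : ℝ) : ℂ)
          - ((b₁ * b₂ : ℝ) : ℂ)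
        = ((2 * p₁.re + 2 * p₂.re + a₁ * a₂ - b₁ * b₂ : ℝ) : ℂ) by push_cast; ring]
    exact_mod_cast Complex.ofReal_eq_zero
  rw [hre]
  constructor
  · rintro (h | h)
    · linear_combination -k1 / 2 - k2 / 2 + (b₁ - b₂ - a₁ + a₂) / 2 * h
    · linear_combination -k1 / 2 - k2 / 2 + (a₂ + b₂ - a₁ - b₁) / 2 * h
  · intro h
    have hsq : (b₁ - b₂) ^ 2 = (a₁ - a₂) ^ 2 := by
      linear_combination k1 + k2 + 2 * h
    rcases sq_eq_sq_iff_eq_or_eq_neg.mp hsq with h' | h'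
    · right; linarith
    · left; linarith
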